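/- Fix N ≥ 2, real numbers 0 < a_1 < ... < a_N and p_1, ..., p_{N−1} > 0, and set q_{N−1} := p_1 + ... + p_{N−1}. For p_N > 0, let s(p_N) denote the unique stationary tuple for the parameters (a_1,...,a_N, p_1,...,p_N), and let s' denote the unique stationary tuple for the parameters (a_1,...,a_{N−1}, p_1,...,p_{N−1}). Then, with the convention s_0 = s'_0 = 0, as p_N → 0⁺: for every i ∈ {1,...,N−1}, s_i(p_N) − s_{i−1}(p_N) converges to s'_i − s'_{i−1}, and s_N(p_N) − s_{N−1}(p_N) converges to (a_N − a_{N−1})/q_{N−1}. -/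

import Mathlib

open Filter Topology
open scoped Classical

noncomputable section

/-- The positive part `x₊ = max x 0` of a real number. -/
def pos' (x : ℝ) : ℝ := max x 0

/-- `qq p i = p 1 + ... + p i` (so `qq p 0 = 0`). -/
def qq (p : ℕ → ℝ) (i : ℕ) : ℝ := ∑ j ∈ Finset.Icc 1 i, p j

/-- `dpar a i = a i - a (i-1)`, with the convention `a 0 = 0`. -/
def dpar (a : ℕ → ℝ) (i : ℕ) : ℝ := if i = 1 then a 1 else a i - a (i - 1)

/-- `(a, p)` is a parameter tuple in `P^{2N}`:
`0 < a 1 < a 2 < ... < a N` and `p 1, ..., p N > 0`. -/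
def IsParam (N : ℕ) (a p : ℕ → ℝ) : Prop :=
  0 < a 1 ∧ (∀ i, 1 ≤ i → i < N → a i < a (i + 1)) ∧ (∀ i, 1 ≤ i → i ≤ N → 0 < p i)

/-- `s` is a stationary tuple for the parameters `(a, p)`:
`0 < s 1 < ... < s N` and `a i = ∑_{j=1}^N p j * (s i - s j + s 1)₊` for `1 ≤ i ≤ N`. -/
def IsStationaryTuple (N : ℕ) (a p s : ℕ → ℝ) : Prop :=
  0 < s 1 ∧ (∀ i, 1 ≤ i → i < N → s i < s (i + 1)) ∧
  ∀ i, 1 ≤ i → i ≤ N → a i = ∑ j ∈ Finset.Icc 1 N, p j * pos' (s i - s j + s 1)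

/-- The inverse of (the restriction to `[0, ∞)` of) a function `y : ℝ → ℝ`. -/
def tinv (y : ℝ → ℝ) (x : ℝ) : ℝ := Function.invFunOn y (Set.Ici 0) x

/-- The right derivative of `y` at `t` (the derivative of `y` at `t` within `[t, ∞)`). -/
def rD (y : ℝ → ℝ) (t : ℝ) : ℝ := derivWithin y (Set.Ici t) t

/-- The sequence `(y k)` satisfies recurrence (R).  The condition on the initial function `y 0`
(continuous, piecewise linear with at most `N` points of non-differentiability, vanishing at `0`,
with non-decreasing right derivative taking values in `{q 1, ..., q N}`) is encoded through its
canonical representation: such functions are exactly those of the form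
`t ↦ ∑_{j=1}^N p j * (t - c j)₊` with `c` non-negative, non-decreasing and `c 1 = 0`. -/
def SatisfiesR (N : ℕ) (a p : ℕ → ℝ) (y : ℕ → ℝ → ℝ) : Prop :=
  (∃ c : ℕ → ℝ, c 1 = 0 ∧ (∀ j, 1 ≤ j → j ≤ N → 0 ≤ c j) ∧
      (∀ j, 1 ≤ j → j < N → c j ≤ c (j + 1)) ∧
      ∀ t : ℝ, 0 ≤ t → y 0 t = ∑ j ∈ Finset.Icc 1 N, p j * pos' (t - c j)) ∧
  ∀ k : ℕ, ∀ t : ℝ, 0 ≤ t →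
    y (k + 1) t = ∑ j ∈ Finset.Icc 1 N, p j * pos' (t - tinv (y k) (a j) + tinv (y k) (a 1))

/-- The breakpoints `c j` of the lower bounding trajectory `y₀⁻`:
`c 1 = 0` and `c j = d 1 / q 1 + ∑_{l=2}^j d l / q (l-1)` for `j ≥ 2`. -/
def cminus (a p : ℕ → ℝ) (j : ℕ) : ℝ :=
  if j ≤ 1 then 0
  else a 1 / qq p 1 + ∑ l ∈ Finset.Icc 2 j, (a l - a (l - 1)) / qq p (l - 1)

/-- The lower bounding initial trajectory `y₀⁻`. -/
def yminus0 (N : ℕ) (a p : ℕ → ℝ) : ℝ → ℝ :=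
  fun t => ∑ j ∈ Finset.Icc 1 N, p j * pos' (t - cminus a p j)

/-- The upper bounding initial trajectory `y₀⁺ : t ↦ q N * t`. -/
def yplus0 (N : ℕ) (p : ℕ → ℝ) : ℝ → ℝ := fun t => qq p N * t

/-- The sequence satisfying recurrence (R) with prescribed initial term `y0`. -/
def iterR (N : ℕ) (a p : ℕ → ℝ) (y0 : ℝ → ℝ) : ℕ → ℝ → ℝ
  | 0 => y0
  | k + 1 => fun t =>
      ∑ j ∈ Finset.Icc 1 N,
        p j * pos' (t - tinv (iterR N a p y0 k) (a j) + tinv (iterR N a p y0 k) (a 1))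

/-- `y` is a stationary trajectory: an increasing bijection of `[0,∞)` satisfying the
fixed-point equation of recurrence (R). -/
def IsStatTraj (N : ℕ) (a p : ℕ → ℝ) (y : ℝ → ℝ) : Prop :=
  StrictMonoOn y (Set.Ici 0) ∧ Set.BijOn y (Set.Ici 0) (Set.Ici 0) ∧
  ∀ t : ℝ, 0 ≤ t → y t = ∑ j ∈ Finset.Icc 1 N, p j * pos' (t - tinv y (a j) + tinv y (a 1))

/-- `E_N`: the set of pairs `(i, j)` with `1 ≤ i < j ≤ N`. -/
def ENfin (N : ℕ) : Finset (ℕ × ℕ) :=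
  (Finset.Icc 1 N ×ˢ Finset.Icc 1 N).filter fun e => e.1 < e.2

/-- `Nested e e'` means `e ≼_E e'`, i.e. `e` is nested in `e'`. -/
def Nested (e e' : ℕ × ℕ) : Prop := e'.1 ≤ e.1 ∧ e.1 < e.2 ∧ e.2 ≤ e'.2

/-- `E` is the edge set of a downward closed graph on `{1, ..., N}`. -/
def IsDCGraph (N : ℕ) (E : Finset (ℕ × ℕ)) : Prop :=
  E ⊆ ENfin N ∧ ∀ e ∈ E, ∀ e' : ℕ × ℕ, Nested e' e → e' ∈ E

/-- `bG E i` is the greatest `j > i` with `(i, j) ∈ E`, and `i` if there is no such `j`;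
by convention `bG E 0 = 1`. -/
def bG (E : Finset (ℕ × ℕ)) (i : ℕ) : ℕ :=
  if i = 0 then 1 else max i ((E.filter fun e => e.1 = i).sup fun e => e.2)

/-- `m(G)`: the maximal elements of `E` for `≼_E`. -/
def maxE (E : Finset (ℕ × ℕ)) : Finset (ℕ × ℕ) :=
  E.filter fun e => ∀ e' ∈ E, Nested e e' → e' = e

/-- `M(G)`: the minimal elements of `E_N \ E` for `≼_E`. -/
def minNE (N : ℕ) (E : Finset (ℕ × ℕ)) : Finset (ℕ × ℕ) :=
  (ENfin N \ E).filter fun e => ∀ e' ∈ ENfin N \ E, Nested e' e → e' = e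

/-- The map `T(G) : ℝ^N → ℝ^N`. -/
def TG (a p : ℕ → ℝ) (E : Finset (ℕ × ℕ)) (s : ℕ → ℝ) (i : ℕ) : ℝ :=
  (1 / qq p (bG E i)) * (a i + ∑ j ∈ Finset.Icc 1 (bG E i), p j * (s j - s 1))

/-- The product of `γ` over the consecutive pairs (edges) of a list of vertices. -/
def pathProd (γ : ℕ → ℕ → ℝ) (l : List ℕ) : ℝ := (List.zipWith γ l l.tail).prod

/-- `Γ i j`: the sum, over all directed paths from `i` to `j` using edges of `E`, of the
product of `γ` over the edges of the path.  Since all edges of a DC graph increase, a directed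
path from `i` to `j` is identified with the set `S ⊆ (i, j)` of its intermediate vertices,
subject to consecutive vertices being joined by edges of `E`. -/
def GammaPath (E : Finset (ℕ × ℕ)) (γ : ℕ → ℕ → ℝ) (i j : ℕ) : ℝ :=
  if i = j then 1
  else if i < j then
    ∑ S ∈ (Finset.Ioo i j).powerset,
      if List.Chain' (fun u v => (u, v) ∈ E) (Finset.sort (insert i (insert j S)) (· ≤ ·))
      then pathProd γ (Finset.sort (insert i (insert j S)) (· ≤ ·)) else 0
  else 0

/-- The edge weight `γ^G_{i,j}`. -/
def gammaG (p : ℕ → ℝ) (E : Finset (ℕ × ℕ)) (i j : ℕ) : ℝ :=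
  (qq p (bG E i) - qq p (max (j - 1) (bG E (i - 1)))) / qq p (bG E (i - 1))

/-- `Γ^G_{i,j}`. -/
def GammaG (p : ℕ → ℝ) (E : Finset (ℕ × ℕ)) (i j : ℕ) : ℝ := GammaPath E (gammaG p E) i j

/-- `z_1^G (a, p)`. -/
def z1G (N : ℕ) (a p : ℕ → ℝ) (E : Finset (ℕ × ℕ)) : ℝ :=
  (∑ j ∈ Finset.Icc 1 N, GammaG p E 1 j * dpar a j / qq p (bG E (j - 1))) /
  (1 + ∑ j ∈ Finset.Icc 1 N,
      GammaG p E 1 j * (qq p (bG E j) - qq p (bG E (j - 1))) / qq p (bG E (j - 1)))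

/-- `z_i^G (a, p)`. -/
def zG (N : ℕ) (a p : ℕ → ℝ) (E : Finset (ℕ × ℕ)) (i : ℕ) : ℝ :=
  if i = 1 then z1G N a p E
  else
    (∑ j ∈ Finset.Icc i N, GammaG p E i j * dpar a j / qq p (bG E (j - 1))) -
      z1G N a p E *
        ∑ j ∈ Finset.Icc i N,
          GammaG p E i j * (qq p (bG E j) - qq p (bG E (j - 1))) / qq p (bG E (j - 1))

/-- `Z^G_{i,j} (a, p) = z_{i+1}^G + ... + z_j^G`. -/
def ZG (N : ℕ) (a p : ℕ → ℝ) (E : Finset (ℕ × ℕ)) (i j : ℕ) : ℝ :=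
  ∑ l ∈ Finset.Icc (i + 1) j, zG N a p E l

/-- The DC graph `Gr(a, p)` read off from the stationary tuple `s = s(a, p)`: its edges are
the pairs `(i, j) ∈ E_N` with `s 1 > s j - s i`. -/
def GrEdges (N : ℕ) (s : ℕ → ℝ) : Finset (ℕ × ℕ) :=
  (ENfin N).filter fun e => s e.2 - s e.1 < s 1

/-- `ζ` solves the linear system `S^G (a, p)`. -/
def SolvesS (N : ℕ) (a p : ℕ → ℝ) (E : Finset (ℕ × ℕ)) (ζ : ℕ → ℝ) : Prop :=
  ∀ i, 1 ≤ i → i ≤ N →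
    a i = ∑ j ∈ Finset.Icc 1 (bG E i),
      p j * ((∑ l ∈ Finset.Icc 1 i, ζ l) - (∑ l ∈ Finset.Icc 1 j, ζ l) + ζ 1)

/-- `P^{2N}`, viewed as a (cylinder) subset of the space of pairs of real sequences; only the
coordinates `a 1, ..., a N, p 1, ..., p N` are constrained. -/
def Pset (N : ℕ) : Set ((ℕ → ℝ) × (ℕ → ℝ)) := {ap | IsParam N ap.1 ap.2}

/-- The region `P_G = {(a, p) ∈ P^{2N} : Gr(a, p) = G}`. -/
def PGset (N : ℕ) (E : Finset (ℕ × ℕ)) : Set ((ℕ → ℝ) × (ℕ → ℝ)) :=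
  {ap | IsParam N ap.1 ap.2 ∧ ∃ s : ℕ → ℝ, IsStationaryTuple N ap.1 ap.2 s ∧ GrEdges N s = E}

/-- The boundary of `P_G` relative to `P^{2N}`.  Since `P^{2N}` is open, the closure of `P_G`
relative to `P^{2N}` is `closure (PGset N E) ∩ Pset N` and its relative interior is
`interior (PGset N E)`. -/
def relBoundary (N : ℕ) (E : Finset (ℕ × ℕ)) : Set ((ℕ → ℝ) × (ℕ → ℝ)) :=
  (closure (PGset N E) ∩ Pset N) \ interior (PGset N E)

/-- The trajectory `y^{(m)}` built from a tuple `s`: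
`t ↦ ∑_{j=1}^N p j * (t - s j + s 1)₊`. -/
def trajOfS (N : ℕ) (p s : ℕ → ℝ) : ℝ → ℝ :=
  fun t => ∑ j ∈ Finset.Icc 1 N, p j * pos' (t - s j + s 1)

/-- The DC graph `G^{(m)}` associated with a tuple `s`: its edges are the `(i, j) ∈ E_N` with
`t^{(m)} (a i) - s j + s 1 > 0`, where `t^{(m)}` is the inverse of `trajOfS N p s`. -/
def GrFromS (N : ℕ) (a p s : ℕ → ℝ) : Finset (ℕ × ℕ) :=
  (ENfin N).filter fun e => 0 < tinv (trajOfS N p s) (a e.1) - s e.2 + s 1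

end

section AuxStmt18

open Filter Topology

private lemma pos'_nonneg (x : ℝ) : 0 ≤ pos' x := le_max_right x 0

private lemma pos'_eq_self {x : ℝ} (h : 0 ≤ x) : pos' x = x := max_eq_left h

private lemma pos'_mono : Monotone pos' := fun _ _ h => max_le_max h le_rfl

private lemma pos'_sub_le {x y : ℝ} (h : x ≤ y) : pos' y - pos' x ≤ y - x := by
  have h1 : pos' y ≤ pos' x + (y - x) := by
    apply max_le
    · have := le_max_left x (0 : ℝ); simp only [pos'] at *; linarith
    · have := le_max_right x (0 : ℝ); simp only [pos'] at *; linarith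
  linarith

private lemma mono_of_chain {f : ℕ → ℝ} {M : ℕ} (h : ∀ i, 1 ≤ i → i < M → f i < f (i + 1)) :
    ∀ i j, 1 ≤ i → i ≤ j → j ≤ M → f i ≤ f j := by
  intro i j h1
  induction j with
  | zero => intro hij _; exfalso; omega
  | succ n ih =>
    intro hij hjM
    rcases Nat.lt_or_ge i (n + 1) with hlt | hge
    · exact le_trans (ih (by omega) (by omega)) (le_of_lt (h n (by omega) (by omega)))
    · have h2 : i = n + 1 := by omega
      exact le_of_eq (congrArg f h2)

private lemma stat_mono {M : ℕ} {a p s : ℕ → ℝ} (hs : IsStationaryTuple M a p s) :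
    ∀ i j, 1 ≤ i → i ≤ j → j ≤ M → s i ≤ s j := mono_of_chain hs.2.1

private lemma stat_pos {M : ℕ} {a p s : ℕ → ℝ} (hs : IsStationaryTuple M a p s) :
    ∀ i, 1 ≤ i → i ≤ M → 0 < s i := fun i h1 hM =>
  lt_of_lt_of_le hs.1 (stat_mono hs 1 i le_rfl h1 hM)

private lemma stat_le {M : ℕ} (hM : 1 ≤ M) {a p s t : ℕ → ℝ}
    (hp : ∀ i, 1 ≤ i → i ≤ M → 0 < p i)
    (hs : IsStationaryTuple M a p s) (ht : IsStationaryTuple M a p t)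
    (h1 : s 1 ≤ t 1) : ∀ j ∈ Finset.Icc 1 M, t j ≤ s j := by
  have h1mem : 1 ∈ Finset.Icc 1 M := Finset.mem_Icc.mpr ⟨le_rfl, hM⟩
  obtain ⟨i0, hi0, hmax⟩ :=
    Finset.exists_max_image (Finset.Icc 1 M) (fun i => t i - s i) ⟨1, h1mem⟩
  obtain ⟨hi01, hi0M⟩ := Finset.mem_Icc.mp hi0
  have key : ∀ j ∈ Finset.Icc 1 M,
      p j * pos' (s i0 - s j + s 1) ≤ p j * pos' (t i0 - t j + t 1) := by
    intro j hj
    obtain ⟨hj1, hjM⟩ := Finset.mem_Icc.mp hj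
    have hd := hmax j hj
    apply mul_le_mul_of_nonneg_left _ (le_of_lt (hp j hj1 hjM))
    apply pos'_mono
    linarith
  have hsum : ∑ j ∈ Finset.Icc 1 M, p j * pos' (s i0 - s j + s 1)
      = ∑ j ∈ Finset.Icc 1 M, p j * pos' (t i0 - t j + t 1) := by
    rw [← hs.2.2 i0 hi01 hi0M, ← ht.2.2 i0 hi01 hi0M]
  have heach := (Finset.sum_eq_sum_iff_of_le key).mp hsum
  have h1eq := heach 1 h1mem
  have e1 : s i0 - s 1 + s 1 = s i0 := by ring
  have e2 : t i0 - t 1 + t 1 = t i0 := by ring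
  rw [e1, e2] at h1eq
  have hp1 := hp 1 le_rfl hM
  have hst0 : s i0 = t i0 := by
    have hc := mul_left_cancel₀ (ne_of_gt hp1) h1eq
    rwa [pos'_eq_self (le_of_lt (stat_pos hs i0 hi01 hi0M)),
      pos'_eq_self (le_of_lt (stat_pos ht i0 hi01 hi0M))] at hc
  intro j hj
  have := hmax j hj
  linarith

private lemma stat_unique {M : ℕ} (hM : 1 ≤ M) {a p s t : ℕ → ℝ}
    (hp : ∀ i, 1 ≤ i → i ≤ M → 0 < p i)
    (hs : IsStationaryTuple M a p s) (ht : IsStationaryTuple M a p t) :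
    ∀ i, 1 ≤ i → i ≤ M → s i = t i := by
  intro i h1 hiM
  have himem : i ∈ Finset.Icc 1 M := Finset.mem_Icc.mpr ⟨h1, hiM⟩
  have h1mem : 1 ∈ Finset.Icc 1 M := Finset.mem_Icc.mpr ⟨le_rfl, hM⟩
  rcases le_total (s 1) (t 1) with h | h
  · have A := stat_le hM hp hs ht h
    have B := stat_le hM hp ht hs (A 1 h1mem)
    exact le_antisymm (B i himem) (A i himem)
  · have A := stat_le hM hp ht hs h
    have B := stat_le hM hp hs ht (A 1 h1mem)
    exact le_antisymm (A i himem) (B i himem)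

private lemma eps_bounds {M : ℕ} (hM : 1 ≤ M) {a p : ℕ → ℝ}
    (ha : ∀ i, 1 ≤ i → i < M + 1 → a i < a (i + 1))
    (hp : ∀ i, 1 ≤ i → i ≤ M → 0 < p i)
    {ε : ℝ} (hε0 : 0 < ε) (hε1 : ε ≤ 1) {s : ℕ → ℝ}
    (hst : IsStationaryTuple (M + 1) a (fun j => if j = M + 1 then ε else p j) s) :
    (∀ i, 1 ≤ i → i ≤ M + 1 → s i ≤ a (M + 1) / p 1) ∧
    a 1 / (qq p M + 1) ≤ s 1 ∧
    (∀ i, 1 ≤ i → i < M + 1 → (a (i + 1) - a i) / (qq p M + 1) ≤ s (i + 1) - s i) := by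
  have hp1 : 0 < p 1 := hp 1 le_rfl hM
  have hpe_pos : ∀ j, 1 ≤ j → j ≤ M + 1 → 0 < (if j = M + 1 then ε else p j) := by
    intro j h1 h2
    by_cases hj : j = M + 1
    · rw [if_pos hj]; exact hε0
    · rw [if_neg hj]; exact hp j h1 (by omega)
  have heq : ∀ i, 1 ≤ i → i ≤ M + 1 → a i = ∑ j ∈ Finset.Icc 1 (M + 1),
      (if j = M + 1 then ε else p j) * pos' (s i - s j + s 1) := hst.2.2
  have hsmono := mono_of_chain hst.2.1
  have hs1 : 0 < s 1 := hst.1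
  have hq0 : 0 ≤ qq p M :=
    Finset.sum_nonneg fun j hj => (hp j (Finset.mem_Icc.mp hj).1 (Finset.mem_Icc.mp hj).2).le
  have hsum : ∑ j ∈ Finset.Icc 1 (M + 1), (if j = M + 1 then ε else p j) = qq p M + ε := by
    have e1 : ∑ j ∈ Finset.Icc 1 M, (if j = M + 1 then ε else p j)
        = ∑ j ∈ Finset.Icc 1 M, p j :=
      Finset.sum_congr rfl fun j hj =>
        if_neg (by have := (Finset.mem_Icc.mp hj).2; omega)
    rw [Finset.sum_Icc_succ_top (by omega : 1 ≤ M + 1), e1, if_pos rfl]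
    rfl
  refine ⟨?_, ?_, ?_⟩
  · intro i h1 h2
    have heqi := heq i h1 h2
    have hterm : p 1 * s i ≤ a i := by
      have h1mem : (1 : ℕ) ∈ Finset.Icc 1 (M + 1) := Finset.mem_Icc.mpr ⟨le_rfl, by omega⟩
      have hsingle := Finset.single_le_sum
        (f := fun j => (if j = M + 1 then ε else p j) * pos' (s i - s j + s 1))
        (fun j hj => mul_nonneg
          (hpe_pos j (Finset.mem_Icc.mp hj).1 (Finset.mem_Icc.mp hj).2).le (pos'_nonneg _))
        h1mem
      rw [← heqi] at hsingle
      have harg : s i - s 1 + s 1 = s i := by ring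
      rw [if_neg (by omega : ¬ (1 : ℕ) = M + 1), harg,
        pos'_eq_self (le_of_lt (lt_of_lt_of_le hs1 (hsmono 1 i le_rfl h1 h2)))] at hsingle
      exact hsingle
    have haiN : a i ≤ a (M + 1) := mono_of_chain ha i (M + 1) h1 h2 le_rfl
    rw [le_div_iff₀ hp1, mul_comm]
    linarith
  · have heq1 := heq 1 le_rfl (by omega)
    have hle : a 1 ≤ (qq p M + 1) * s 1 := by
      have hstep : a 1 ≤ ∑ j ∈ Finset.Icc 1 (M + 1), (if j = M + 1 then ε else p j) * s 1 := by
        rw [heq1]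
        apply Finset.sum_le_sum
        intro j hj
        obtain ⟨hj1, hj2⟩ := Finset.mem_Icc.mp hj
        apply mul_le_mul_of_nonneg_left _ (hpe_pos j hj1 hj2).le
        have hsj : s 1 ≤ s j := hsmono 1 j le_rfl hj1 hj2
        calc pos' (s 1 - s j + s 1) ≤ pos' (s 1) := pos'_mono (by linarith)
        _ = s 1 := pos'_eq_self hs1.le
      rw [← Finset.sum_mul, hsum] at hstep
      nlinarith
    rw [div_le_iff₀ (by linarith : (0:ℝ) < qq p M + 1)]
    nlinarith
  · intro i h1 h2
    have heqi := heq i h1 (by omega)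
    have heqsi := heq (i + 1) (by omega) (by omega)
    have hgap0 : 0 ≤ s (i + 1) - s i := by have := hst.2.1 i h1 h2; linarith
    have hle : a (i + 1) - a i ≤ (qq p M + 1) * (s (i + 1) - s i) := by
      have hsub : a (i + 1) - a i = ∑ j ∈ Finset.Icc 1 (M + 1),
          ((if j = M + 1 then ε else p j) * pos' (s (i + 1) - s j + s 1)
            - (if j = M + 1 then ε else p j) * pos' (s i - s j + s 1)) := by
        rw [Finset.sum_sub_distrib, ← heqi, ← heqsi]
      rw [hsub]
      have hstep : ∑ j ∈ Finset.Icc 1 (M + 1),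
          ((if j = M + 1 then ε else p j) * pos' (s (i + 1) - s j + s 1)
            - (if j = M + 1 then ε else p j) * pos' (s i - s j + s 1))
          ≤ ∑ j ∈ Finset.Icc 1 (M + 1), (if j = M + 1 then ε else p j) * (s (i + 1) - s i) := by
        apply Finset.sum_le_sum
        intro j hj
        obtain ⟨hj1, hj2⟩ := Finset.mem_Icc.mp hj
        rw [← mul_sub]
        apply mul_le_mul_of_nonneg_left _ (hpe_pos j hj1 hj2).le
        have harg : s i - s j + s 1 ≤ s (i + 1) - s j + s 1 := by linarith
        have := pos'_sub_le harg
        linarith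
      rw [← Finset.sum_mul, hsum] at hstep
      nlinarith
    rw [div_le_iff₀ (by linarith : (0:ℝ) < qq p M + 1), mul_comm]
    exact hle

end AuxStmt18

/-- behaviour of the stationary tuple as `p N → 0⁺`, Lemma 4.12. -/
theorem stmt_18 (N : ℕ) (hN : 2 ≤ N) (a p : ℕ → ℝ)
    (ha1 : 0 < a 1) (ha : ∀ i, 1 ≤ i → i < N → a i < a (i + 1))
    (hp : ∀ i, 1 ≤ i → i ≤ N - 1 → 0 < p i)
    (S : ℝ → ℕ → ℝ)
    (hS : ∀ ε : ℝ, 0 < ε → IsStationaryTuple N a (fun j => if j = N then ε else p j) (S ε))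
    (s' : ℕ → ℝ) (hs' : IsStationaryTuple (N - 1) a p s') :
    (∀ i, 1 ≤ i → i ≤ N - 1 →
      Filter.Tendsto (fun ε => S ε i - (if i = 1 then 0 else S ε (i - 1)))
        (nhdsWithin 0 (Set.Ioi 0))
        (nhds (s' i - (if i = 1 then 0 else s' (i - 1))))) ∧
    Filter.Tendsto (fun ε => S ε N - S ε (N - 1)) (nhdsWithin 0 (Set.Ioi 0))
      (nhds ((a N - a (N - 1)) / qq p (N - 1))) := by
  obtain ⟨M, rfl⟩ : ∃ M, N = M + 1 := ⟨N - 1, by omega⟩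
  simp only [Nat.add_sub_cancel] at hp hs' ⊢
  have hM : 1 ≤ M := by omega
  have hq0' : 0 < qq p M := by
    apply Finset.sum_pos
    · intro j hj
      exact hp j (Finset.mem_Icc.mp hj).1 (Finset.mem_Icc.mp hj).2
    · exact ⟨1, Finset.mem_Icc.mpr ⟨le_rfl, hM⟩⟩
  have hq1 : (0 : ℝ) < qq p M + 1 := by linarith
  have hp1 : 0 < p 1 := hp 1 le_rfl hM
  have keyAll : Filter.Tendsto (fun ε => (fun k : Fin (M + 1) => S ε ((k : ℕ) + 1)))
      (nhdsWithin 0 (Set.Ioi 0))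
      (nhds (fun k : Fin (M + 1) =>
        if (k : ℕ) + 1 = M + 1 then s' M + (a (M + 1) - a M) / qq p M
        else s' ((k : ℕ) + 1))) := by
    apply Filter.tendsto_of_subseq_tendsto
    intro ns hns
    have hmem : ∀ᶠ n in Filter.atTop, ns n ∈ Set.Ioo (0 : ℝ) 1 :=
      hns.eventually_mem (Ioo_mem_nhdsGT_of_mem (Set.mem_Ico.mpr ⟨le_rfl, one_pos⟩))
    set K : Set (Fin (M + 1) → ℝ) :=
      Set.Icc (fun _ => a 1 / (qq p M + 1)) (fun _ => a (M + 1) / p 1) with hK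
    set W : ℕ → (Fin (M + 1) → ℝ) := fun n => fun k : Fin (M + 1) => S (ns n) ((k : ℕ) + 1)
      with hW
    have hWmem : ∀ᶠ n in Filter.atTop, W n ∈ K := by
      filter_upwards [hmem] with n hn
      have hb := eps_bounds hM ha hp hn.1 hn.2.le (hS (ns n) hn.1)
      have hsmono := mono_of_chain (hS (ns n) hn.1).2.1
      rw [hK, Set.mem_Icc]
      constructor
      · intro k
        have hk := k.isLt
        exact le_trans hb.2.1 (hsmono 1 ((k : ℕ) + 1) le_rfl (by omega) (by omega))
      · intro k
        have hk := k.isLt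
        exact hb.1 ((k : ℕ) + 1) (by omega) (by omega)
    obtain ⟨u, huK, φ, hφ, hWφ⟩ := isCompact_Icc.tendsto_subseq' hWmem.frequently
    set e : ℕ → ℝ := fun n => ns (φ n) with he
    have heIoo : ∀ᶠ n in Filter.atTop, e n ∈ Set.Ioo (0 : ℝ) 1 :=
      hφ.tendsto_atTop.eventually hmem
    have he0 : Filter.Tendsto e Filter.atTop (nhds 0) :=
      (hns.comp hφ.tendsto_atTop).mono_right nhdsWithin_le_nhds
    have hcoord : ∀ k : Fin (M + 1),
        Filter.Tendsto (fun n => S (e n) ((k : ℕ) + 1)) Filter.atTop (nhds (u k)) :=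
      fun k => tendsto_pi_nhds.mp hWφ k
    set sstar : ℕ → ℝ := fun i => if h : i - 1 < M + 1 then u ⟨i - 1, h⟩ else 0 with hsstar
    have hu' : ∀ i, 1 ≤ i → i ≤ M + 1 →
        Filter.Tendsto (fun n => S (e n) i) Filter.atTop (nhds (sstar i)) := by
      intro i h1 h2
      have hlt : i - 1 < M + 1 := by omega
      have hco : Filter.Tendsto (fun n => S (e n) (i - 1 + 1)) Filter.atTop
          (nhds (u ⟨i - 1, hlt⟩)) := hcoord ⟨i - 1, hlt⟩
      rw [show i - 1 + 1 = i from by omega] at hco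
      have hss : sstar i = u ⟨i - 1, hlt⟩ := by simp only [hsstar]; exact dif_pos hlt
      rw [hss]
      exact hco
    have hchain : ∀ i, 1 ≤ i → i < M + 1 → sstar i < sstar (i + 1) := by
      intro i h1 h2
      have hgap : (a (i + 1) - a i) / (qq p M + 1) ≤ sstar (i + 1) - sstar i := by
        apply le_of_tendsto_of_tendsto tendsto_const_nhds
          ((hu' (i + 1) (by omega) (by omega)).sub (hu' i h1 (by omega)))
        filter_upwards [heIoo] with n hn
        exact (eps_bounds hM ha hp hn.1 hn.2.le (hS (e n) hn.1)).2.2 i h1 h2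
      have hpos : 0 < (a (i + 1) - a i) / (qq p M + 1) :=
        div_pos (by linarith [ha i h1 h2]) hq1
      linarith
    have hs1pos : 0 < sstar 1 := by
      have hlow : a 1 / (qq p M + 1) ≤ sstar 1 := by
        apply le_of_tendsto_of_tendsto tendsto_const_nhds (hu' 1 le_rfl (by omega))
        filter_upwards [heIoo] with n hn
        exact (eps_bounds hM ha hp hn.1 hn.2.le (hS (e n) hn.1)).2.1
      have := div_pos ha1 hq1
      linarith
    have hG4 : ∀ i, 1 ≤ i → i ≤ M + 1 →
        a i = ∑ j ∈ Finset.Icc 1 (M + 1),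
          (if j = M + 1 then 0 else p j) * pos' (sstar i - sstar j + sstar 1) := by
      intro i h1 h2
      have hR : Filter.Tendsto (fun n => ∑ j ∈ Finset.Icc 1 (M + 1),
          (if j = M + 1 then e n else p j)
            * pos' (S (e n) i - S (e n) j + S (e n) 1)) Filter.atTop
          (nhds (∑ j ∈ Finset.Icc 1 (M + 1),
            (if j = M + 1 then 0 else p j) * pos' (sstar i - sstar j + sstar 1))) := by
        apply tendsto_finset_sum
        intro j hj
        obtain ⟨hj1, hj2⟩ := Finset.mem_Icc.mp hj
        have hX : Filter.Tendsto (fun n => S (e n) i - S (e n) j + S (e n) 1)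
            Filter.atTop (nhds (sstar i - sstar j + sstar 1)) :=
          ((hu' i h1 h2).sub (hu' j hj1 hj2)).add (hu' 1 le_rfl (by omega))
        have hposx : Filter.Tendsto (fun n => pos' (S (e n) i - S (e n) j + S (e n) 1))
            Filter.atTop (nhds (pos' (sstar i - sstar j + sstar 1))) :=
          hX.max tendsto_const_nhds
        by_cases hjM : j = M + 1
        · simp only [if_pos hjM]
          exact he0.mul hposx
        · simp only [if_neg hjM]
          exact tendsto_const_nhds.mul hposx
      have hconst : (fun n => ∑ j ∈ Finset.Icc 1 (M + 1),
          (if j = M + 1 then e n else p j)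
            * pos' (S (e n) i - S (e n) j + S (e n) 1)) =ᶠ[Filter.atTop]
          (fun _ => a i) := by
        filter_upwards [heIoo] with n hn
        exact ((hS (e n) hn.1).2.2 i h1 h2).symm
      exact (tendsto_nhds_unique (Filter.Tendsto.congr' hconst hR) tendsto_const_nhds).symm
    have hstat : IsStationaryTuple M a p sstar := by
      refine ⟨hs1pos, fun i h1 h2 => hchain i h1 (by omega), ?_⟩
      intro i h1 h2
      have h4 := hG4 i h1 (by omega)
      rw [Finset.sum_Icc_succ_top (by omega : 1 ≤ M + 1), if_pos rfl, zero_mul, add_zero] at h4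
      rw [h4]
      apply Finset.sum_congr rfl
      intro j hj
      rw [if_neg (by have := (Finset.mem_Icc.mp hj).2; omega)]
    have hid : ∀ i, 1 ≤ i → i ≤ M → sstar i = s' i := stat_unique hM hp hstat hs'
    have hmono := mono_of_chain (M := M + 1) (f := sstar) fun i hi1 hi2 => hchain i hi1 hi2
    have hs'mono := mono_of_chain (M := M) (f := s') hs'.2.1
    have hs'1 : 0 < s' 1 := hs'.1
    have htop : sstar (M + 1) = s' M + (a (M + 1) - a M) / qq p M := by
      have h4 := hG4 (M + 1) (by omega) le_rfl
      rw [Finset.sum_Icc_succ_top (by omega : 1 ≤ M + 1), if_pos rfl, zero_mul, add_zero] at h4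
      have h4' : a (M + 1) = ∑ j ∈ Finset.Icc 1 M, p j * (sstar (M + 1) - s' j + s' 1) := by
        rw [h4]
        apply Finset.sum_congr rfl
        intro j hj
        obtain ⟨hj1, hj2⟩ := Finset.mem_Icc.mp hj
        have hjle : sstar j ≤ sstar (M + 1) := hmono j (M + 1) hj1 (by omega) le_rfl
        have h1le : sstar 1 ≤ sstar j := hmono 1 j le_rfl hj1 (by omega)
        rw [if_neg (by omega : ¬ j = M + 1),
          pos'_eq_self (by linarith), hid j hj1 hj2, hid 1 le_rfl hM]
      have hM' : a M = ∑ j ∈ Finset.Icc 1 M, p j * (s' M - s' j + s' 1) := by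
        rw [hs'.2.2 M hM le_rfl]
        apply Finset.sum_congr rfl
        intro j hj
        obtain ⟨hj1, hj2⟩ := Finset.mem_Icc.mp hj
        have hjle : s' j ≤ s' M := hs'mono j M hj1 hj2 le_rfl
        have h1le : s' 1 ≤ s' j := hs'mono 1 j le_rfl hj1 hj2
        rw [pos'_eq_self (by linarith)]
      have hdiff : a (M + 1) - a M = qq p M * (sstar (M + 1) - s' M) := by
        rw [h4', hM', ← Finset.sum_sub_distrib]
        have hterm : ∀ j ∈ Finset.Icc 1 M,
            p j * (sstar (M + 1) - s' j + s' 1) - p j * (s' M - s' j + s' 1)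
              = p j * (sstar (M + 1) - s' M) := by
          intro j _; ring
        rw [Finset.sum_congr rfl hterm, ← Finset.sum_mul]
        rfl
      have hqne : qq p M ≠ 0 := ne_of_gt hq0'
      have hfrac : (a (M + 1) - a M) / qq p M = sstar (M + 1) - s' M := by
        rw [hdiff]
        field_simp
      rw [hfrac]
      ring
    have hfin : ∀ k : Fin (M + 1), u k = sstar ((k : ℕ) + 1) := by
      intro k
      have hlt : (k : ℕ) + 1 - 1 < M + 1 := by have := k.isLt; omega
      have hss : sstar ((k : ℕ) + 1) = u ⟨(k : ℕ) + 1 - 1, hlt⟩ := by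
        simp only [hsstar]; exact dif_pos hlt
      rw [hss]
      exact rfl
    have hufinal : u = (fun k : Fin (M + 1) =>
        if (k : ℕ) + 1 = M + 1 then s' M + (a (M + 1) - a M) / qq p M
        else s' ((k : ℕ) + 1)) := by
      funext k
      rw [hfin k]
      by_cases hk : (k : ℕ) + 1 = M + 1
      · rw [if_pos hk, hk, htop]
      · have hk2 : (k : ℕ) + 1 ≤ M := by have := k.isLt; omega
        rw [if_neg hk]
        exact hid _ (by omega) hk2
    exact ⟨φ, hufinal ▸ hWφ⟩
  have key : ∀ i, 1 ≤ i → i ≤ M + 1 →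
      Filter.Tendsto (fun ε => S ε i) (nhdsWithin 0 (Set.Ioi 0))
        (nhds (if i = M + 1 then s' M + (a (M + 1) - a M) / qq p M else s' i)) := by
    intro i h1 h2
    have hlt : i - 1 < M + 1 := by omega
    have hco := tendsto_pi_nhds.mp keyAll ⟨i - 1, hlt⟩
    have hco' : Filter.Tendsto (fun ε => S ε (i - 1 + 1)) (nhdsWithin 0 (Set.Ioi 0))
        (nhds (if (i - 1) + 1 = M + 1 then s' M + (a (M + 1) - a M) / qq p M
          else s' ((i - 1) + 1))) := hco
    rw [show i - 1 + 1 = i from by omega] at hco'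
    exact hco'
  constructor
  · intro i h1 h2
    by_cases hi : i = 1
    · subst hi
      have h := key 1 le_rfl (by omega)
      rw [if_neg (by omega : ¬ (1 : ℕ) = M + 1)] at h
      simpa using h
    · simp only [if_neg hi]
      have ha' := key i h1 (by omega)
      rw [if_neg (by omega : ¬ i = M + 1)] at ha'
      have hb' := key (i - 1) (by omega) (by omega)
      rw [if_neg (by omega : ¬ i - 1 = M + 1)] at hb'
      exact ha'.sub hb'
  · have ha' := key (M + 1) (by omega) le_rfl
    rw [if_pos rfl] at ha'
    have hb' := key M hM (by omega)
    rw [if_neg (by omega : ¬ M = M + 1)] at hb'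
    have hfinal := ha'.sub hb'
    have heq2 : (a (M + 1) - a M) / qq p M
        = s' M + (a (M + 1) - a M) / qq p M - s' M := by ring
    rw [heq2]
    exact hfinal
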